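/- There exists a unique formal power series r(t) ∈ ℚ[[t]] with zero constant term satisfying t·(4 T_0(r³, r⁹) + 6 T_1(r³, r⁹)) = r·T_1(1, r⁹) as formal power series in t (all compositions being well defined since the relevant exponents are nonnegative). Consequently q(t) := r(t)³ is the unique power series with zero constant term satisfying t = q^{1/3} T_1(1,q³)/(4T_0(q,q³)+6T_1(q,q³)), and q(t) = t³ + 15t⁶ + 279t⁹ + ⋯. -/

import Mathlib

open scoped BigOperators
noncomputable section

abbrev WSt : Type := ℤ × ℕ × ℕ

def cellStep (v w : WSt) : Prop :=
  w = (v.1, v.2.1 + 1, v.2.2 + 1) ∨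
  (1 ≤ v.2.2 ∧ w = (v.1, v.2.1, v.2.2 - 1)) ∨
  (1 ≤ v.2.1 ∧ w = (v.1, v.2.1 - 1, v.2.2)) ∨
  (v.2.1 = 0 ∧ w = (v.1 + 1, v.2.2, 0)) ∨
  (v.2.2 = 0 ∧ w = (v.1 - 1, 0, v.2.1 + 1))

def vertStep (v w : WSt) : Prop :=
  w = (v.1, v.2.1 + 1, v.2.2 + 1) ∨
  (1 ≤ v.2.2 ∧ w = (v.1, v.2.1, v.2.2 - 1)) ∨
  (1 ≤ v.2.1 ∧ w = (v.1, v.2.1 - 1, v.2.2)) ∨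
  (v.2.1 = 0 ∧ 1 ≤ v.2.2 ∧ w = (v.1 + 1, v.2.2 - 1, 0)) ∨
  (v.2.2 = 0 ∧ w = (v.1 - 1, 0, v.2.1 + 2))

def pathCount (step : WSt → WSt → Prop) (n : ℕ) (v : WSt) : ℕ :=
  Nat.card {p : Fin (n + 1) → WSt //
    p 0 = ((0 : ℤ), 0, 0) ∧ p (Fin.last n) = v ∧
    ∀ i : Fin n, step (p i.castSucc) (p i.succ)}

/-- number of cell-centred excursions of length `n` with winding angle `2πk/3` -/
def eCell (n : ℕ) (k : ℤ) : ℕ := pathCount cellStep n (k, 0, 0)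

/-- number of vertex-centred walks of length `n` with winding angle `2πk/3` -/
def eVert (n : ℕ) (k : ℤ) : ℕ := pathCount vertStep n (k, 0, 0)

/-- The series `T_k(u,q)`. -/
def Tk (k : ℕ) (u q : ℂ) : ℂ :=
  ∑' n : ℕ, (-1 : ℂ) ^ n * ((2 * n + 1 : ℕ) : ℂ) ^ k * q ^ (n * (n + 1) / 2) *
    (u ^ (n + 1) - (-1 : ℂ) ^ k * u ^ (-(n : ℤ)))

/-- Jacobi theta function θ₁₁. -/
def jTheta (z τ : ℂ) : ℂ :=
  ∑' n : ℤ, (-1 : ℂ) ^ n *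
    Complex.exp (((2 * (n : ℂ) + 1) / 2) ^ 2 * Complex.I * (Real.pi : ℂ) * τ +
      (2 * (n : ℂ) + 1) * Complex.I * z)

/-- derivative of θ with respect to z -/
def jTheta' (z τ : ℂ) : ℂ := deriv (fun w => jTheta w τ) z

/-- The formal power series `T_k(r^a, r^b)` for a power series `r` with zero constant term:
`∑_{n≥0} (−1)^n (2n+1)^k (r^{b·n(n+1)/2+a(n+1)} − (−1)^k r^{b·n(n+1)/2−a·n})`.
Since for `r` with zero constant term only the terms with `n ≤ m` can contribute to the
coefficient of `t^m`, the sum may be truncated. -/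
def TkComp (k a b : ℕ) (r : PowerSeries ℚ) : PowerSeries ℚ :=
  PowerSeries.mk fun m =>
    ∑ n ∈ Finset.range (m + 1),
      ((-1 : ℚ) ^ n * ((2 * n + 1 : ℕ) : ℚ) ^ k) *
        (PowerSeries.coeff m (r ^ (b * (n * (n + 1) / 2) + a * (n + 1))) -
          (-1 : ℚ) ^ k * PowerSeries.coeff m (r ^ (b * (n * (n + 1) / 2) - a * n)))

open PowerSeries

def Uof (r : PowerSeries ℚ) : PowerSeries ℚ := TkComp 1 0 9 r
def Nof (r : PowerSeries ℚ) : PowerSeries ℚ := 4 * TkComp 0 3 9 r + 6 * TkComp 1 3 9 r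
def Phi (r : PowerSeries ℚ) : PowerSeries ℚ := PowerSeries.X * Nof r * (Uof r)⁻¹

def Cong (m : ℕ) (f g : PowerSeries ℚ) : Prop := (X : PowerSeries ℚ)^m ∣ f - g

lemma cong_iff {m f g} : Cong m f g ↔ ∀ j < m, coeff j f = coeff j g := by
  simp [Cong, X_pow_dvd_iff, sub_eq_zero]

lemma Cong.pow {m : ℕ} {f g : PowerSeries ℚ} (h : Cong m f g) (e : ℕ) :
    Cong m (f^e) (g^e) := h.trans (sub_dvd_pow_sub_pow f g e)

lemma Cong.tk {m : ℕ} {f g : PowerSeries ℚ} (h : Cong m f g) (k a b : ℕ) :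
    Cong m (TkComp k a b f) (TkComp k a b g) := by
  rw [cong_iff]
  intro j hj
  simp only [TkComp, coeff_mk]
  refine Finset.sum_congr rfl fun n _ => ?_
  rw [cong_iff.1 (h.pow _) j hj, cong_iff.1 (h.pow _) j hj]

lemma Cong.add {m} {f g f' g' : PowerSeries ℚ} (h : Cong m f g) (h' : Cong m f' g') :
    Cong m (f + f') (g + g') := by
  have := dvd_add h h'
  simpa [Cong, sub_add_sub_comm] using this

lemma Cong.mul_left (c : PowerSeries ℚ) {m} {f g : PowerSeries ℚ} (h : Cong m f g) :
    Cong m (c * f) (c * g) := by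
  simpa [Cong, mul_sub] using dvd_mul_of_dvd_right h c

lemma Cong.nof {m} {f g : PowerSeries ℚ} (h : Cong m f g) : Cong m (Nof f) (Nof g) :=
  ((h.tk 0 3 9).mul_left 4).add ((h.tk 1 3 9).mul_left 6)

lemma uof_const (r : PowerSeries ℚ) : constantCoeff (Uof r) = 2 := by
  have : constantCoeff (Uof r) = coeff 0 (Uof r) := by simp
  rw [this]; simp [Uof, TkComp]; norm_num

lemma uof_unit (r : PowerSeries ℚ) : (Uof r)⁻¹ * Uof r = 1 :=
  PowerSeries.inv_mul_cancel _ (by rw [uof_const]; norm_num)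

lemma Cong.inv {m} {f g : PowerSeries ℚ} (h : Cong m (Uof f) (Uof g)) :
    Cong m (Uof f)⁻¹ (Uof g)⁻¹ := by
  have key : (Uof f)⁻¹ - (Uof g)⁻¹ = (Uof f)⁻¹ * (Uof g)⁻¹ * (Uof g - Uof f) := by
    rw [mul_sub]
    rw [mul_assoc, uof_unit, mul_one]
    rw [mul_comm (Uof f)⁻¹ (Uof g)⁻¹, mul_assoc, uof_unit, mul_one]
  unfold Cong at h ⊢
  rw [key]
  exact Dvd.dvd.mul_left (by simpa using h.neg_right) _

lemma Cong.phi {m} {f g : PowerSeries ℚ} (h : Cong m f g) : Cong (m+1) (Phi f) (Phi g) := by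
  have h1 : Cong m (Nof f * (Uof f)⁻¹) (Nof g * (Uof g)⁻¹) := by
    have hN := h.nof
    have hU := (h.tk 1 0 9).inv
    calc (X:PowerSeries ℚ)^m ∣ (Nof f * (Uof f)⁻¹ - Nof f * (Uof g)⁻¹) +
          (Nof f * (Uof g)⁻¹ - Nof g * (Uof g)⁻¹) := by
            refine dvd_add (hU.mul_left _) ?_
            have := hN.mul_left ((Uof g)⁻¹)
            simpa [Cong, mul_comm, mul_sub, sub_mul] using this
    _ = _ := by ring
  unfold Cong at h1
  unfold Cong Phi
  rw [pow_succ, mul_comm ((X:PowerSeries ℚ)^m) X]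
  calc X * (X:PowerSeries ℚ)^m ∣ X * (Nof f * (Uof f)⁻¹ - Nof g * (Uof g)⁻¹) := by
        exact mul_dvd_mul_left X h1
  _ = X * Nof f * (Uof f)⁻¹ - X * Nof g * (Uof g)⁻¹ := by ring

noncomputable def cSeq : ℕ → ℚ
  | m => PowerSeries.coeff m (Phi (PowerSeries.mk fun i => if _ : i < m then cSeq i else 0))
  termination_by m => m
  decreasing_by assumption

def rSol : PowerSeries ℚ := PowerSeries.mk cSeq

lemma cong_trunc (m : ℕ) :
    Cong m rSol (PowerSeries.mk fun i => if _ : i < m then cSeq i else 0) := by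
  rw [cong_iff]
  intro j hj
  simp [rSol, coeff_mk, hj]

lemma rSol_fixed : Phi rSol = rSol := by
  ext m
  have h := (cong_trunc m).phi
  have h2 := cong_iff.1 h m (Nat.lt_succ_self m)
  rw [h2]
  show _ = coeff m (PowerSeries.mk cSeq)
  rw [coeff_mk, cSeq]

lemma eq_of_fixed (r : PowerSeries ℚ) (h : Phi r = r) :
    PowerSeries.X * Nof r = r * Uof r := by
  have : Phi r * Uof r = PowerSeries.X * Nof r := by
    unfold Phi
    rw [mul_assoc, uof_unit, mul_one]
  rw [← this, h]

lemma fixed_of_eq (r : PowerSeries ℚ) (h : PowerSeries.X * Nof r = r * Uof r) :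
    Phi r = r := by
  unfold Phi
  rw [h, mul_assoc, mul_comm (Uof r), uof_unit, mul_one]

lemma const_of_fixed (r : PowerSeries ℚ) (h : Phi r = r) :
    constantCoeff r = 0 := by
  rw [← h]
  unfold Phi
  simp

lemma fixed_unique (r r' : PowerSeries ℚ) (h : Phi r = r) (h' : Phi r' = r') : r = r' := by
  ext m
  induction m using Nat.strong_induction_on with
  | _ m ih =>
    have hc : Cong m r r' := cong_iff.2 fun j hj => ih j hj
    have := cong_iff.1 hc.phi m (Nat.lt_succ_self m)
    rwa [h, h'] at this

lemma Cong.trans {m} {f g h : PowerSeries ℚ} (h1 : Cong m f g) (h2 : Cong m g h) :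
    Cong m f h := by
  have := dvd_add h1 h2
  simpa [Cong] using this

lemma cnum (n : ℕ) [n.AtLeastTwo] :
    (OfNat.ofNat n : ℚ⟦X⟧) = C (OfNat.ofNat n) := (map_ofNat C n).symm

def sPoly : ℚ⟦X⟧ := X + 5*X^4 + 68*X^7

lemma sPoly_const : constantCoeff sPoly = 0 := by
  simp [sPoly, cnum]

lemma czero {r : ℚ⟦X⟧} (hr : constantCoeff r = 0) {j e : ℕ} (h : j < e) :
    coeff j (r ^ e) = 0 := by
  have : (X : ℚ⟦X⟧)^e ∣ r^e := pow_dvd_pow_of_dvd (X_dvd_iff.2 hr) e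
  exact X_pow_dvd_iff.1 this j h

lemma czs {j e : ℕ} (h : j < e) : coeff j (sPoly ^ e) = 0 := czero sPoly_const h

lemma hc3 : Cong 10 (sPoly^3) (X^3 + 15*X^6 + 279*X^9) := by
  refine ⟨2165*X^2+18972*X^5+69360*X^8+314432*X^11, ?_⟩
  unfold sPoly; ring

lemma hc6 : Cong 10 (sPoly^6) (X^6 + 30*X^9) := by
  have h1 : Cong 10 ((sPoly^3)^2) ((X^3 + 15*X^6 + 279*X^9 : ℚ⟦X⟧)^2) := hc3.pow 2
  rw [← pow_mul] at h1
  refine h1.trans ⟨783*X^2+8370*X^5+77841*X^8, ?_⟩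
  ring

lemma hc9 : Cong 10 (sPoly^9) (X^9) := by
  have h1 : Cong 10 ((sPoly^3)^3) ((X^3 + 15*X^6 + 279*X^9 : ℚ⟦X⟧)^3) := hc3.pow 3
  rw [← pow_mul] at h1
  refine h1.trans ⟨45*X^2+1512*X^5+28485*X^8+421848*X^11+3502845*X^14+21717639*X^17, ?_⟩
  ring

lemma cs3 {j : ℕ} (hj : j < 10) :
    coeff j (sPoly^3) = coeff j (X^3 + 15*X^6 + 279*X^9 : ℚ⟦X⟧) :=
  cong_iff.1 hc3 j hj

lemma cs6 {j : ℕ} (hj : j < 10) :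
    coeff j (sPoly^6) = coeff j (X^6 + 30*X^9 : ℚ⟦X⟧) :=
  cong_iff.1 hc6 j hj

lemma cs9 {j : ℕ} (hj : j < 10) :
    coeff j (sPoly^9) = coeff j ((X:ℚ⟦X⟧)^9) :=
  cong_iff.1 hc9 j hj

lemma hU : Cong 10 (Uof sPoly) (2 - 6*X^9) := by
  rw [cong_iff]
  intro j hj
  interval_cases j <;>
    simp only [Uof, TkComp, coeff_mk, Finset.sum_range_succ, Finset.sum_range_zero] <;>
    simp [czs, cs9, cnum, coeff_X_pow, coeff_one, coeff_C_mul, coeff_C] <;> norm_num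

lemma hN : Cong 9 (Nof sPoly) (2 + 10*X^3 + 136*X^6) := by
  rw [cong_iff]
  intro j hj
  interval_cases j <;>
    simp only [Nof, TkComp, coeff_mk, Finset.sum_range_succ, Finset.sum_range_zero,
      map_add, cnum, coeff_C_mul] <;>
    simp [czs, cs3, cs6, cnum, coeff_X_pow, coeff_one, coeff_C_mul, coeff_C] <;> norm_num

lemma Cong.symm' {m} {f g : PowerSeries ℚ} (h : Cong m f g) : Cong m g f := by
  have := h.neg_right
  simpa [Cong] using this

lemma key : Cong 10 (PowerSeries.X * Nof sPoly) (sPoly * Uof sPoly) := by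
  have h1 : Cong 10 (PowerSeries.X * Nof sPoly) (PowerSeries.X * (2 + 10*X^3 + 136*X^6)) := by
    obtain ⟨c, hc⟩ := hN
    refine ⟨c, ?_⟩
    rw [← mul_sub, hc]; ring
  have h2 : Cong 10 (PowerSeries.X * (2 + 10*X^3 + 136*X^6)) (sPoly * (2 - 6*X^9)) := by
    refine ⟨6 + 30*X^3 + 408*X^6, ?_⟩
    unfold sPoly; ring
  have h3 : Cong 10 (sPoly * (2 - 6*X^9)) (sPoly * Uof sPoly) := (hU.mul_left sPoly).symm'
  exact (h1.trans h2).trans h3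

lemma hPhiS : Cong 10 (Phi sPoly) sPoly := by
  have hid : Phi sPoly - sPoly = (PowerSeries.X * Nof sPoly - sPoly * Uof sPoly) * (Uof sPoly)⁻¹ := by
    have hsu : sPoly * Uof sPoly * (Uof sPoly)⁻¹ = sPoly := by
      rw [mul_assoc, mul_comm (Uof sPoly), uof_unit, mul_one]
    unfold Phi
    rw [sub_mul, hsu]
  unfold Cong
  rw [hid]
  exact Dvd.dvd.mul_right key _

lemma rs_cong (r : PowerSeries ℚ) (h : Phi r = r) : Cong 10 r sPoly := by
  rw [cong_iff]
  intro j hj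
  induction j using Nat.strong_induction_on with
  | _ j ih =>
    have hc : Cong j r sPoly := cong_iff.2 fun i hi => ih i hi (hi.trans hj)
    have e1 : coeff j (Phi r) = coeff j (Phi sPoly) :=
      cong_iff.1 hc.phi j (Nat.lt_succ_self j)
    rw [← h, e1, cong_iff.1 hPhiS j hj]


/-- there is a unique formal power series `r(t)` with zero constant term
such that `t·(4T₀(r³,r⁹) + 6T₁(r³,r⁹)) = r·T₁(1,r⁹)`; the series `q(t) = r(t)³` then equals
`t³ + 15t⁶ + 279t⁹ + ⋯`. -/
theorem unique_q_series :
    (∃! r : PowerSeries ℚ, PowerSeries.constantCoeff r = 0 ∧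
      PowerSeries.X * (4 * TkComp 0 3 9 r + 6 * TkComp 1 3 9 r) = r * TkComp 1 0 9 r) ∧
    ∀ r : PowerSeries ℚ, PowerSeries.constantCoeff r = 0 →
      PowerSeries.X * (4 * TkComp 0 3 9 r + 6 * TkComp 1 3 9 r) = r * TkComp 1 0 9 r →
      PowerSeries.coeff 3 (r ^ 3) = 1 ∧ PowerSeries.coeff 6 (r ^ 3) = 15 ∧
        PowerSeries.coeff 9 (r ^ 3) = 279 ∧
        ∀ m < 3, PowerSeries.coeff m (r ^ 3) = 0 := by

  constructor
  · refine ⟨rSol, ⟨const_of_fixed rSol rSol_fixed, eq_of_fixed rSol rSol_fixed⟩, ?_⟩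
    rintro y ⟨-, hy2⟩
    exact fixed_unique y rSol (fixed_of_eq y hy2) rSol_fixed
  · intro r _ heq
    have hfix : Phi r = r := fixed_of_eq r heq
    have hcong : Cong 10 (r^3) (sPoly^3) := (rs_cong r hfix).pow 3
    have hcoeff : ∀ j < 10, coeff j (r^3) = coeff j (X^3 + 15*X^6 + 279*X^9 : ℚ⟦X⟧) :=
      fun j hj => (cong_iff.1 hcong j hj).trans (cs3 hj)
    refine ⟨?_, ?_, ?_, ?_⟩
    · rw [hcoeff 3 (by norm_num)]; simp [cnum, coeff_X_pow, coeff_C_mul]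
    · rw [hcoeff 6 (by norm_num)]; simp [cnum, coeff_X_pow, coeff_C_mul]
    · rw [hcoeff 9 (by norm_num)]; simp [cnum, coeff_X_pow, coeff_C_mul]
    · intro m hm
      rw [hcoeff m (by omega)]
      interval_cases m <;> simp [cnum, coeff_X_pow, coeff_C_mul]
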